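/- For every integer n ≥ 1 and every fixed a ∈ ℝ, the derivative of the Kravchuk polynomial with respect to x satisfies d/dx K_n(x,a) = −2·∑_{i=1}^{n} ((1−(−1)^i)/(2i))·K_{n−i}(x,a); equivalently, d/dx K_n(x,a) = −2·∑_{i odd, 1 ≤ i ≤ n} (1/i)·K_{n−i}(x,a). -/

import Mathlib

/-- Generalized binomial coefficient `C(t, k) = t(t-1)⋯(t-k+1)/k!` of a real number. -/
noncomputable def genBinom (t : ℝ) (k : ℕ) : ℝ :=
  (∏ j ∈ Finset.range k, (t - j)) / (Nat.factorial k)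

/-- The binary Kravchuk polynomial `K_n(x,a) = ∑_{i=0}^n (-1)^i C(x,i) C(a-x, n-i)`. -/
noncomputable def K (n : ℕ) (x a : ℝ) : ℝ :=
  ∑ i ∈ Finset.range (n + 1), (-1 : ℝ) ^ i * genBinom x i * genBinom (a - x) (n - i)

lemma genBinom_zero (t : ℝ) : genBinom t 0 = 1 := by simp [genBinom]

lemma genBinom_succ (t : ℝ) (k : ℕ) :
    genBinom t (k + 1) = genBinom t k * (t - k) / (k + 1) := by
  have hf : (Nat.factorial k : ℝ) ≠ 0 := Nat.cast_ne_zero.mpr (Nat.factorial_ne_zero k)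
  have hk : ((k : ℝ) + 1) ≠ 0 := by positivity
  rw [genBinom, genBinom, Finset.prod_range_succ, Nat.factorial_succ]
  push_cast
  rw [div_mul_eq_mul_div, div_div, mul_comm ((k:ℝ)+1)]

lemma genBinom_mul (x : ℝ) (m : ℕ) :
    ((m : ℝ) + 1) * genBinom x (m + 1) = genBinom x m * (x - m) := by
  rw [genBinom_succ]
  have hk : ((m : ℝ) + 1) ≠ 0 := by positivity
  field_simp

lemma genBinom_sub_mul (x : ℝ) {j k : ℕ} (h1 : 1 ≤ j) (h2 : j ≤ k) :
    genBinom x (k - j) * (x - k)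
      = ((k + 1 - j : ℕ) : ℝ) * genBinom x (k + 1 - j) - j * genBinom x (k - j) := by
  obtain ⟨m, rfl⟩ : ∃ m, k = m + j := ⟨k - j, (Nat.sub_add_cancel h2).symm⟩
  have h3 : m + j - j = m := by omega
  have h4 : m + j + 1 - j = m + 1 := by omega
  rw [h3, h4]
  have := genBinom_mul x m
  push_cast
  nlinarith [this]

lemma sum_step (k : ℕ) (x : ℝ) :
    ∑ j ∈ Finset.Icc 1 (k + 1), ((-1 : ℝ) ^ (j + 1) / j) * genBinom x (k + 1 - j)
      = ((∑ j ∈ Finset.Icc 1 k, ((-1 : ℝ) ^ (j + 1) / j) * genBinom x (k - j)) * (x - k)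
          + genBinom x k) / (k + 1) := by
  have hk : ((k : ℝ) + 1) ≠ 0 := by positivity
  rw [eq_div_iff hk]
  rw [Finset.sum_Icc_succ_top (by omega)]
  rw [add_mul, Finset.sum_mul, Finset.sum_mul]
  -- rewrite each term of the (x - k) sum
  have hterm : ∀ j ∈ Finset.Icc 1 k,
      ((-1 : ℝ) ^ (j + 1) / j) * genBinom x (k - j) * (x - k)
        = ((-1 : ℝ) ^ (j + 1) / j) * (((k + 1 - j : ℕ) : ℝ) * genBinom x (k + 1 - j))
          - (-1 : ℝ) ^ (j + 1) * genBinom x (k - j) := by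
    intro j hj
    simp only [Finset.mem_Icc] at hj
    have hj0 : (j : ℝ) ≠ 0 := by exact_mod_cast Nat.one_le_iff_ne_zero.mp hj.1
    rw [mul_assoc, genBinom_sub_mul x hj.1 hj.2]
    field_simp
  rw [Finset.sum_congr rfl hterm, Finset.sum_sub_distrib]
  -- telescoping part
  have htel : (∑ j ∈ Finset.Icc 1 k, (-1 : ℝ) ^ (j + 1) * genBinom x (k + 1 - j))
      + ∑ j ∈ Finset.Icc 1 k, (-1 : ℝ) ^ (j + 1) * genBinom x (k - j)
      = genBinom x k - (-1 : ℝ) ^ k := by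
    rw [← Finset.sum_add_distrib]
    rw [show Finset.Icc 1 k = Finset.Ico 1 (k + 1) from rfl, Finset.sum_Ico_eq_sum_range]
    simp only [show k + 1 - 1 = k from rfl]
    have tele := Finset.sum_range_sub' (fun i => (-1 : ℝ) ^ i * genBinom x (k - i)) k
    simp only [pow_zero, one_mul, Nat.sub_zero, Nat.sub_self, genBinom_zero, mul_one] at tele
    rw [← tele]
    apply Finset.sum_congr rfl
    intro i hi
    simp only [Finset.mem_range] at hi
    have e1 : k + 1 - (1 + i) = k - i := by omega
    have e2 : k - (1 + i) = k - (i + 1) := by omega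
    rw [e1, e2]
    ring
  -- now assemble
  have expand : ∀ j ∈ Finset.Icc 1 k,
      ((-1 : ℝ) ^ (j + 1) / j * genBinom x (k + 1 - j)) * ((k : ℝ) + 1)
        = ((-1 : ℝ) ^ (j + 1) / j) * (((k + 1 - j : ℕ) : ℝ) * genBinom x (k + 1 - j))
          + (-1 : ℝ) ^ (j + 1) * genBinom x (k + 1 - j) := by
    intro j hj
    simp only [Finset.mem_Icc] at hj
    have hj0 : (j : ℝ) ≠ 0 := by exact_mod_cast Nat.one_le_iff_ne_zero.mp hj.1
    have hc : ((k + 1 - j : ℕ) : ℝ) = (k : ℝ) + 1 - j := by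
      push_cast [Nat.cast_sub (by omega : j ≤ k + 1)]; ring
    rw [hc]
    field_simp
    ring
  rw [Finset.sum_congr rfl expand, Finset.sum_add_distrib]
  have hlast : ((-1 : ℝ) ^ (k + 1 + 1) / ((k : ℝ) + 1)) * genBinom x (k - k) * ((k : ℝ) + 1)
      = (-1 : ℝ) ^ k := by
    simp only [Nat.sub_self, genBinom_zero]
    field_simp
    ring
  push_cast
  linarith [htel, hlast]

lemma genBinom_hasDerivAt (k : ℕ) (x : ℝ) :
    HasDerivAt (fun t => genBinom t k)
      (∑ j ∈ Finset.Icc 1 k, ((-1 : ℝ) ^ (j + 1) / j) * genBinom x (k - j)) x := by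
  induction k with
  | zero =>
    rw [show Finset.Icc 1 0 = (∅ : Finset ℕ) from rfl]
    simp only [Finset.sum_empty, genBinom_zero]
    exact hasDerivAt_const x (1 : ℝ)
  | succ k ih =>
    have h1 := (ih.fun_mul ((hasDerivAt_id x).sub_const (k : ℝ))).div_const ((k : ℝ) + 1)
    simp only [id_eq, mul_one] at h1
    have hfun : (fun t : ℝ => genBinom t k * (t - (k : ℝ)) / ((k : ℝ) + 1))
        = fun t => genBinom t (k + 1) := funext fun t => (genBinom_succ t k).symm
    rw [hfun] at h1
    rw [sum_step k x]
    simpa using h1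

lemma genBinom_comp_hasDerivAt (a : ℝ) (m : ℕ) (x : ℝ) :
    HasDerivAt (fun t => genBinom (a - t) m)
      (-(∑ j ∈ Finset.Icc 1 m, ((-1 : ℝ) ^ (j + 1) / j) * genBinom (a - x) (m - j))) x := by
  have h := (genBinom_hasDerivAt m (a - x)).comp x
    ((hasDerivAt_const x a).sub (hasDerivAt_id x))
  simpa [Function.comp_def] using h


/-- For `n ≥ 1`, `d/dx K_n(x,a) = -2 ∑_{i=1}^n ((1-(-1)^i)/(2i)) K_{n-i}(x,a)`. -/
theorem kravchuk_deriv_x (n : ℕ) (hn : 1 ≤ n) (a x : ℝ) :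
    deriv (fun t : ℝ => K n t a) x
      = -2 * ∑ i ∈ Finset.Icc 1 n, ((1 - (-1 : ℝ) ^ i) / (2 * i)) * K (n - i) x a := by
  classical
  have hK : HasDerivAt (fun t : ℝ => K n t a)
      (∑ i ∈ Finset.range (n + 1),
        (((-1 : ℝ) ^ i * (∑ j ∈ Finset.Icc 1 i, ((-1 : ℝ) ^ (j + 1) / j) * genBinom x (i - j)))
            * genBinom (a - x) (n - i)
          + ((-1 : ℝ) ^ i * genBinom x i)
            * (-(∑ j ∈ Finset.Icc 1 (n - i), ((-1 : ℝ) ^ (j + 1) / j) * genBinom (a - x) (n - i - j))))) x := by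
    exact HasDerivAt.fun_sum fun i _ =>
      ((genBinom_hasDerivAt i x).const_mul ((-1 : ℝ) ^ i)).fun_mul (genBinom_comp_hasDerivAt a (n - i) x)
  rw [hK.deriv]
  have hsq : ∀ j : ℕ, ((-1 : ℝ) ^ j) * ((-1 : ℝ) ^ j) = 1 := by
    intro j
    rw [← pow_add, show j + j = 2 * j by omega, pow_mul]
    norm_num
  calc
    ∑ i ∈ Finset.range (n + 1),
        (((-1 : ℝ) ^ i * (∑ j ∈ Finset.Icc 1 i, ((-1 : ℝ) ^ (j + 1) / j) * genBinom x (i - j)))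
            * genBinom (a - x) (n - i)
          + ((-1 : ℝ) ^ i * genBinom x i)
            * (-(∑ j ∈ Finset.Icc 1 (n - i), ((-1 : ℝ) ^ (j + 1) / j) * genBinom (a - x) (n - i - j))))
      = (∑ i ∈ Finset.range (n + 1), ∑ j ∈ Finset.Icc 1 i,
            (-1 : ℝ) ^ i * (((-1 : ℝ) ^ (j + 1) / j) * genBinom x (i - j)) * genBinom (a - x) (n - i))
        + (∑ i ∈ Finset.range (n + 1), ∑ j ∈ Finset.Icc 1 (n - i),
            -((-1 : ℝ) ^ i * genBinom x i * (((-1 : ℝ) ^ (j + 1) / j) * genBinom (a - x) (n - i - j)))) := by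
        rw [← Finset.sum_add_distrib]
        refine Finset.sum_congr rfl fun i _ => ?_
        rw [Finset.mul_sum, Finset.sum_mul, mul_neg, Finset.mul_sum, ← Finset.sum_neg_distrib]
    _ = (∑ j ∈ Finset.Icc 1 n, ∑ i ∈ Finset.Icc j n,
            (-1 : ℝ) ^ i * (((-1 : ℝ) ^ (j + 1) / j) * genBinom x (i - j)) * genBinom (a - x) (n - i))
        + (∑ j ∈ Finset.Icc 1 n, ∑ i ∈ Finset.range (n - j + 1),
            -((-1 : ℝ) ^ i * genBinom x i * (((-1 : ℝ) ^ (j + 1) / j) * genBinom (a - x) (n - i - j)))) := by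
        have s1 : (∑ i ∈ Finset.range (n + 1), ∑ j ∈ Finset.Icc 1 i,
              (-1 : ℝ) ^ i * (((-1 : ℝ) ^ (j + 1) / j) * genBinom x (i - j)) * genBinom (a - x) (n - i))
            = ∑ j ∈ Finset.Icc 1 n, ∑ i ∈ Finset.Icc j n,
              (-1 : ℝ) ^ i * (((-1 : ℝ) ^ (j + 1) / j) * genBinom x (i - j)) * genBinom (a - x) (n - i) := by
          refine Finset.sum_comm' ?_
          intro i j
          simp only [Finset.mem_range, Finset.mem_Icc]
          omega
        have s2 : (∑ i ∈ Finset.range (n + 1), ∑ j ∈ Finset.Icc 1 (n - i),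
              -((-1 : ℝ) ^ i * genBinom x i * (((-1 : ℝ) ^ (j + 1) / j) * genBinom (a - x) (n - i - j))))
            = ∑ j ∈ Finset.Icc 1 n, ∑ i ∈ Finset.range (n - j + 1),
              -((-1 : ℝ) ^ i * genBinom x i * (((-1 : ℝ) ^ (j + 1) / j) * genBinom (a - x) (n - i - j))) := by
          refine Finset.sum_comm' ?_
          intro i j
          simp only [Finset.mem_range, Finset.mem_Icc]
          omega
        rw [s1, s2]
    _ = ∑ j ∈ Finset.Icc 1 n,
          ((∑ i ∈ Finset.Icc j n,
            (-1 : ℝ) ^ i * (((-1 : ℝ) ^ (j + 1) / j) * genBinom x (i - j)) * genBinom (a - x) (n - i))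
          + (∑ i ∈ Finset.range (n - j + 1),
            -((-1 : ℝ) ^ i * genBinom x i * (((-1 : ℝ) ^ (j + 1) / j) * genBinom (a - x) (n - i - j))))) :=
        Finset.sum_add_distrib.symm
    _ = -2 * ∑ j ∈ Finset.Icc 1 n, ((1 - (-1 : ℝ) ^ j) / (2 * j)) * K (n - j) x a := by
        rw [Finset.mul_sum]
        refine Finset.sum_congr rfl fun j hj => ?_
        simp only [Finset.mem_Icc] at hj
        have hj0 : (j : ℝ) ≠ 0 := by exact_mod_cast Nat.one_le_iff_ne_zero.mp hj.1
        have hin1 : (∑ i ∈ Finset.Icc j n,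
              (-1 : ℝ) ^ i * (((-1 : ℝ) ^ (j + 1) / j) * genBinom x (i - j)) * genBinom (a - x) (n - i))
            = -((1 / (j : ℝ)) * K (n - j) x a) := by
          rw [K, show Finset.Icc j n = Finset.Ico j (n + 1) from rfl, Finset.sum_Ico_eq_sum_range,
            show n + 1 - j = n - j + 1 by omega, Finset.mul_sum, ← Finset.sum_neg_distrib]
          refine Finset.sum_congr rfl fun i _ => ?_
          have e1 : j + i - j = i := by omega
          have e2 : n - (j + i) = n - j - i := by omega
          rw [e1, e2]
          have key : (-1 : ℝ) ^ (j + i) * (-1 : ℝ) ^ (j + 1) = -(-1 : ℝ) ^ i := by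
            rw [← pow_add, show j + i + (j + 1) = 2 * j + (i + 1) by omega, pow_add, pow_mul,
              pow_succ]
            norm_num
            ring
          linear_combination (genBinom x i * genBinom (a - x) (n - j - i) / (j : ℝ)) * key
        have hin2 : (∑ i ∈ Finset.range (n - j + 1),
              -((-1 : ℝ) ^ i * genBinom x i * (((-1 : ℝ) ^ (j + 1) / j) * genBinom (a - x) (n - i - j))))
            = ((-1 : ℝ) ^ j / j) * K (n - j) x a := by
          rw [K, Finset.mul_sum]
          refine Finset.sum_congr rfl fun i hi => ?_
          simp only [Finset.mem_range] at hi
          have e2 : n - i - j = n - j - i := by omega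
          rw [e2, pow_succ]
          ring
        rw [hin1, hin2]
        field_simp
        ring
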